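/- For k > 0, the X_1-Laguerre polynomials L̂_m^k and L̂_n^k with m ≠ n (m,n ≥ 1) are orthogonal: ∫_0^∞ L̂_m^k(x) L̂_n^k(x) e^{-x} x^k (x+k)^{-2} dx = 0. -/

import Mathlib

open MeasureTheory Polynomial

/-- Classical generalized Laguerre polynomials L_n^{(k)}, defined by the
three-term recurrence (n+2) L_{n+2} = (2n+k+3 - x) L_{n+1} - (n+1+k) L_n,
with L_0 = 1, L_1 = k + 1 - x. -/
noncomputable def genLaguerre (k : ℝ) : ℕ → Polynomial ℝ
  | 0 => 1
  | 1 => Polynomial.C (k + 1) - Polynomial.X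
  | n + 2 =>
      Polynomial.C (1 / ((n : ℝ) + 2)) *
        ((Polynomial.C (2 * (n : ℝ) + k + 3) - Polynomial.X) * genLaguerre k (n + 1)
          - Polynomial.C ((n : ℝ) + 1 + k) * genLaguerre k n)

/-- X₁-Laguerre polynomial L̂_n^k = -(x+k+1) L_{n-1}^{(k)} + L_{n-2}^{(k)},
with the convention L_{-1}^{(k)} = 0 (so the last term is absent for n = 1). -/
noncomputable def hatL (k : ℝ) (n : ℕ) : Polynomial ℝ :=
  -(Polynomial.X + Polynomial.C (k + 1)) * genLaguerre k (n - 1)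
    + if 2 ≤ n then genLaguerre k (n - 2) else 0

lemma genLaguerre_zero (k : ℝ) : genLaguerre k 0 = 1 := rfl
lemma genLaguerre_one (k : ℝ) : genLaguerre k 1 = C (k + 1) - X := rfl

lemma genLaguerre_rec (k : ℝ) (n : ℕ) :
    C ((n : ℝ) + 2) * genLaguerre k (n + 2) =
      (C (2 * (n : ℝ) + k + 3) - X) * genLaguerre k (n + 1)
        - C ((n : ℝ) + 1 + k) * genLaguerre k n := by
  have h2 : ((n : ℝ) + 2) ≠ 0 := by positivity
  rw [genLaguerre, ← mul_assoc, ← C_mul, mul_one_div, div_self h2, C_1, one_mul]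

lemma lag_D (k : ℝ) : ∀ n : ℕ,
    X * derivative (genLaguerre k (n + 1)) =
      C ((n : ℝ) + 1) * genLaguerre k (n + 1) - C ((n : ℝ) + 1 + k) * genLaguerre k n
  | 0 => by
    simp only [Nat.cast_zero, zero_add, derivative_one, genLaguerre_zero, genLaguerre_one, derivative_sub,
      derivative_C, derivative_X, map_add, map_one, map_zero]
    ring
  | 1 => by
    have e4 := genLaguerre_rec k 0
    have e1 := congrArg derivative e4
    apply mul_left_cancel₀ (a := C (2 : ℝ)) (C_ne_zero.mpr (by norm_num))
    simp only [Nat.reduceAdd, Nat.cast_zero, Nat.cast_one, zero_add, genLaguerre_zero, genLaguerre_one,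
      derivative_mul, derivative_sub, derivative_C, derivative_X, derivative_one,
      derivative_natCast, derivative_ofNat,
      map_add, map_one, map_ofNat, map_mul, map_sub, map_zero] at e1 e4 ⊢
    linear_combination X * e1 - (2 : Polynomial ℝ) * e4
  | (m + 2) => by
    have e4 := genLaguerre_rec k (m + 1)
    have e5 := genLaguerre_rec k m
    have e1 := congrArg derivative e4
    have e2 := lag_D k (m + 1)
    have e3 := lag_D k m
    apply mul_left_cancel₀ (a := C ((m : ℝ) + 3)) (C_ne_zero.mpr (by positivity))
    simp only [add_assoc, Nat.reduceAdd, Nat.cast_add, Nat.cast_one, Nat.cast_ofNat,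
      derivative_mul, derivative_sub, derivative_add, derivative_C, derivative_X,
      derivative_one, derivative_natCast, derivative_ofNat,
      map_add, map_one, map_ofNat, map_mul, map_sub, map_natCast] at e1 e2 e3 e4 e5 ⊢
    linear_combination X * e1 + (2 * (m : Polynomial ℝ) + C k + 5 - X) * e2
      - ((m : Polynomial ℝ) + 2 + C k) * e3 - ((m : Polynomial ℝ) + 3) * e4
      + ((m : Polynomial ℝ) + 2 + C k) * e5
lemma lag_I2 (k : ℝ) : ∀ n : ℕ,
    derivative (genLaguerre k (n + 1)) = derivative (genLaguerre k n) - genLaguerre k n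
  | 0 => by
    simp only [Nat.cast_zero, zero_add, derivative_one, genLaguerre_zero, genLaguerre_one,
      derivative_sub, derivative_C, derivative_X, map_add, map_one, map_zero]
  | (n + 1) => by
    have e1 := congrArg derivative (genLaguerre_rec k n)
    have ih := lag_I2 k n
    have e2 := lag_D k n
    apply mul_left_cancel₀ (a := C ((n : ℝ) + 2)) (C_ne_zero.mpr (by positivity))
    simp only [add_assoc, Nat.reduceAdd, Nat.cast_add, Nat.cast_one, Nat.cast_ofNat,
      derivative_mul, derivative_sub, derivative_add, derivative_C, derivative_X,
      derivative_one, derivative_natCast, derivative_ofNat,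
      map_add, map_one, map_ofNat, map_mul, map_sub, map_natCast] at e1 ih e2 ⊢
    linear_combination e1 + ((n : Polynomial ℝ) + 1 + C k) * ih - e2

lemma hatL_ode (k : ℝ) : ∀ n : ℕ, 1 ≤ n →
    X * (X + C k) * derivative (derivative (hatL k n))
      - (X ^ 2 + X - C (k ^ 2 + k)) * derivative (hatL k n)
      + (X - C k) * hatL k n + C ((n : ℝ) - 1) * (X + C k) * hatL k n = 0
  | 0, h => by omega
  | 1, _ => by
    have : hatL k 1 = -(X + C (k + 1)) := by
      simp [hatL, genLaguerre_zero]
    rw [this]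
    simp only [Nat.cast_one, derivative_neg, derivative_add, derivative_X, derivative_C,
      derivative_one, derivative_zero, map_add, map_one, map_sub, map_zero, map_pow, map_mul]
    ring
  | (m + 2), _ => by
    have hy : hatL k (m + 2) = -(X + C (k + 1)) * genLaguerre k (m + 1) + genLaguerre k m := by
      simp [hatL]
    have r1 := lag_D k m
    have r2 := lag_I2 k m
    have r3 := congrArg derivative r1
    have r4 := congrArg derivative r2
    rw [hy]
    simp only [add_assoc, Nat.reduceAdd, Nat.cast_add, Nat.cast_one, Nat.cast_ofNat,
      derivative_mul, derivative_sub, derivative_add, derivative_neg, derivative_C,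
      derivative_X, derivative_one, derivative_zero, derivative_natCast, derivative_ofNat,
      map_add, map_one, map_ofNat, map_mul, map_sub, map_natCast, map_pow] at r1 r2 r3 r4 ⊢
    linear_combination ((X + C k) * (X + C k + 1)) * r1
      + ((X - C k) * (X + C k + 1) - ((m : Polynomial ℝ) + 1 + C k) * (X + C k) ^ 2
          - X * (X + C k)) * r2
      + (-(X + C k) ^ 2) * r3
      + (-(X * (X + C k))) * r4

lemma key_ident (k : ℝ) (m n : ℕ) (hm : 1 ≤ m) (hn : 1 ≤ n) :
    X * (X + C k) * derivative
        (hatL k m * derivative (hatL k n) - hatL k n * derivative (hatL k m))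
      = (X ^ 2 + X - C (k ^ 2 + k)) *
            (hatL k m * derivative (hatL k n) - hatL k n * derivative (hatL k m))
          + C ((m : ℝ) - (n : ℝ)) * (X + C k) * (hatL k m * hatL k n) := by
  have em := hatL_ode k m hm
  have en := hatL_ode k n hn
  simp only [derivative_mul, derivative_sub, map_sub, map_add, map_pow, map_natCast,
    map_one] at em en ⊢
  linear_combination (hatL k m) * en - (hatL k n) * em

lemma integrable_poly_weight (k : ℝ) (hk : 0 < k) (P : Polynomial ℝ) :
    IntegrableOn (fun x : ℝ => P.eval x * (Real.exp (-x) * x ^ k)) (Set.Ioi 0) := by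
  induction P using Polynomial.induction_on' with
  | add p q hp hq =>
      have h : IntegrableOn
          (fun x : ℝ => eval x p * (Real.exp (-x) * x ^ k)
            + eval x q * (Real.exp (-x) * x ^ k)) (Set.Ioi 0) := hp.add hq
      refine h.congr_fun (fun x _ => ?_) measurableSet_Ioi
      simp [add_mul]
  | monomial j a =>
      have h : IntegrableOn (fun x : ℝ => a * (Real.exp (-x) * x ^ (k + (j:ℝ) + 1 - 1)))
          (Set.Ioi 0) :=
        (Real.GammaIntegral_convergent (s := k + j + 1) (by positivity)).const_mul a
      refine h.congr_fun (fun x hx => ?_) measurableSet_Ioi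
      have hx : (0:ℝ) < x := hx
      rw [eval_monomial]
      rw [add_sub_cancel_right]
      beta_reduce
      rw [Real.rpow_add hx, Real.rpow_natCast]
      ring


/-- For k > 0 and m ≠ n (m,n ≥ 1), the X₁-Laguerre polynomials
are orthogonal: ∫₀^∞ L̂_m^k L̂_n^k e^{-x} x^k (x+k)^{-2} dx = 0. -/
theorem stmt_16 (k : ℝ) (hk : 0 < k) (m n : ℕ) (hm : 1 ≤ m) (hn : 1 ≤ n)
    (hmn : m ≠ n) :
    ∫ x in Set.Ioi (0 : ℝ),
        (hatL k m).eval x * (hatL k n).eval x *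
          (Real.exp (-x) * x ^ k * ((x + k) ^ 2)⁻¹) = 0 := by
  have hk2 : (0:ℝ) < k ^ 2 := by positivity
  set A : Polynomial ℝ :=
    hatL k m * derivative (hatL k n) - hatL k n * derivative (hatL k m) with hA
  set f : ℝ → ℝ := fun x =>
    (hatL k m).eval x * (hatL k n).eval x *
      (Real.exp (-x) * x ^ k * ((x + k) ^ 2)⁻¹) with hf
  set g : ℝ → ℝ := fun x =>
    x ^ (k + 1) * Real.exp (-x) * ((x + k) ^ 2)⁻¹ * A.eval x with hg
  -- continuity of f on (0, ∞)
  have hcf : ContinuousOn f (Set.Ioi 0) := by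
    apply ContinuousOn.mul
    · exact (((hatL k m).continuous_aeval.comp continuous_id).continuousOn.mul
        ((hatL k n).continuous_aeval.comp continuous_id).continuousOn)
    · apply ContinuousOn.mul
      · apply ContinuousOn.mul
        · exact (Real.continuous_exp.comp continuous_neg).continuousOn
        · intro x hx
          exact (Real.continuousAt_rpow_const x k (Or.inl (ne_of_gt hx))).continuousWithinAt
      · apply ContinuousOn.inv₀
        · exact ((continuous_id.add continuous_const).pow 2).continuousOn
        · intro x hx
          have : (0:ℝ) < x + k := by
            have : (0:ℝ) < x := hx
            positivity
          positivity
  -- integrability of f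
  have hint : IntegrableOn f (Set.Ioi 0) := by
    set Q : Polynomial ℝ := hatL k m * hatL k n with hQ
    refine MeasureTheory.Integrable.mono'
      (integrable_poly_weight k hk (Polynomial.C ((k ^ 2)⁻¹) * (Q * Q + 1))) ?_ ?_
    · exact hcf.aestronglyMeasurable measurableSet_Ioi
    · rw [MeasureTheory.ae_restrict_iff' measurableSet_Ioi]
      filter_upwards with x
      intro hx
      have hx0 : (0:ℝ) < x := hx
      have hxk : (0:ℝ) < x + k := by positivity
      have hE : (0:ℝ) < Real.exp (-x) := Real.exp_pos _
      have hW : (0:ℝ) ≤ x ^ k := Real.rpow_nonneg hx0.le k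
      have hI : (0:ℝ) < ((x + k) ^ 2)⁻¹ := by positivity
      have hIk : ((x + k) ^ 2)⁻¹ ≤ (k ^ 2)⁻¹ := by
        apply inv_anti₀ hk2
        have : k ≤ x + k := by linarith
        exact pow_le_pow_left₀ hk.le this 2
      set q : ℝ := (hatL k m).eval x * (hatL k n).eval x with hq
      have habs : |q| ≤ q * q + 1 := by nlinarith [abs_nonneg q, sq_abs q, sq_nonneg (|q| - 1)]
      have : ‖f x‖ = |q| * (Real.exp (-x) * x ^ k) * ((x + k) ^ 2)⁻¹ := by
        rw [hf]
        simp only []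
        rw [show (hatL k m).eval x * (hatL k n).eval x *
            (Real.exp (-x) * x ^ k * ((x + k) ^ 2)⁻¹)
            = q * (Real.exp (-x) * x ^ k) * ((x + k) ^ 2)⁻¹ by rw [hq]; ring]
        rw [Real.norm_eq_abs, abs_mul, abs_mul, abs_of_pos hI,
          abs_of_nonneg (by positivity : (0:ℝ) ≤ Real.exp (-x) * x ^ k)]
      rw [this]
      rw [Polynomial.eval_mul, Polynomial.eval_add, Polynomial.eval_mul, Polynomial.eval_one,
        Polynomial.eval_C]
      have h1 : |q| * (Real.exp (-x) * x ^ k) * ((x + k) ^ 2)⁻¹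
          ≤ (q * q + 1) * (Real.exp (-x) * x ^ k) * ((k) ^ 2)⁻¹ := by
        apply mul_le_mul
        · exact mul_le_mul_of_nonneg_right habs (by positivity)
        · exact hIk
        · exact hI.le
        · exact mul_nonneg (by nlinarith [mul_self_nonneg q]) (by positivity)
      calc |q| * (Real.exp (-x) * x ^ k) * ((x + k) ^ 2)⁻¹
          ≤ (q * q + 1) * (Real.exp (-x) * x ^ k) * (k ^ 2)⁻¹ := h1
        _ = (k ^ 2)⁻¹ * (Polynomial.eval x Q * Polynomial.eval x Q + 1) *
              (Real.exp (-x) * x ^ k) := by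
            rw [hQ]; simp only [Polynomial.eval_mul]; rw [hq]; ring
  -- derivative of g
  have hderiv : ∀ x ∈ Set.Ioi (0:ℝ), HasDerivAt g (((m:ℝ) - (n:ℝ)) * f x) x := by
    intro x hx
    have hx0 : (0:ℝ) < x := hx
    have hxk : (0:ℝ) < x + k := by positivity
    have hne : ((x + k) ^ 2 : ℝ) ≠ 0 := by positivity
    have h1 : HasDerivAt (fun y : ℝ => y ^ (k + 1)) ((k + 1) * x ^ k) x := by
      simpa [add_sub_cancel_right] using
        Real.hasDerivAt_rpow_const (x := x) (p := k + 1) (Or.inl hx0.ne')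
    have h2 : HasDerivAt (fun y : ℝ => Real.exp (-y)) (-Real.exp (-x)) x := by
      have h := (Real.hasDerivAt_exp (-x)).comp x (hasDerivAt_neg x)
      rw [mul_neg, mul_one] at h
      exact h
    have h3 : HasDerivAt (fun y : ℝ => ((y + k) ^ 2)⁻¹)
        (-(2 * (x + k)) / ((x + k) ^ 2) ^ 2) x := by
      have hd : HasDerivAt (fun y : ℝ => (y + k) ^ 2) (2 * (x + k)) x := by
        have h : HasDerivAt (fun y : ℝ => (y + k) ^ 2) _ x := ((hasDerivAt_id x).add_const k).pow 2
        convert h using 1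
        simp
      exact hd.inv hne
    have h4 : HasDerivAt (fun y : ℝ => A.eval y) ((derivative A).eval x) x :=
      A.hasDerivAt x
    have total : HasDerivAt g _ x := ((h1.mul h2).mul h3).mul h4
    convert total using 1
    have hkey := congrArg (Polynomial.eval x) (key_ident k m n hm hn)
    rw [← hA] at hkey
    simp only [Polynomial.eval_mul, Polynomial.eval_add, Polynomial.eval_sub,
      Polynomial.eval_pow, Polynomial.eval_X, Polynomial.eval_C] at hkey
    have hsplit : x ^ (k + 1) = x ^ k * x := by
      rw [Real.rpow_add hx0, Real.rpow_one]
    rw [hf]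
    simp only []
    simp only [Pi.mul_apply]
    rw [hsplit, show (-(2 * (x + k)) / ((x + k) ^ 2) ^ 2)
      = -(2 * (x + k)) * (((x + k) ^ 2)⁻¹) ^ 2 by rw [div_eq_mul_inv, ← inv_pow]]
    have hI : ((x + k) ^ 2)⁻¹ * (x + k) ^ 2 = 1 := inv_mul_cancel₀ hne
    linear_combination
      (-(Real.exp (-x) * x ^ k * (((x + k) ^ 2)⁻¹) ^ 2 * (x + k))) * hkey
        + (Real.exp (-x) * x ^ k * ((x + k) ^ 2)⁻¹ *
            ((k + 1 - x) * A.eval x + x * (derivative A).eval x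
              - ((m:ℝ) - (n:ℝ)) * ((hatL k m).eval x * (hatL k n).eval x))) * hI
  -- continuity of g at 0 within [0, ∞)
  have hcont : ContinuousWithinAt g (Set.Ici 0) 0 := by
    rw [hg]
    apply ContinuousWithinAt.mul
    apply ContinuousWithinAt.mul
    apply ContinuousWithinAt.mul
    · exact (Real.continuousAt_rpow_const 0 (k + 1)
        (Or.inr (by positivity))).continuousWithinAt
    · exact (Real.continuous_exp.comp continuous_neg).continuousAt.continuousWithinAt
    · refine ContinuousAt.continuousWithinAt ?_
      refine ContinuousAt.inv₀ (((continuous_id.add continuous_const).pow 2).continuousAt) ?_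
      simpa using hk2.ne'
    · exact (Polynomial.continuous A).continuousAt.continuousWithinAt
  -- limit of g at infinity
  have htop : Filter.Tendsto g Filter.atTop (nhds 0) := by
    set N : ℕ := ⌈k⌉₊ + 1 with hN
    have hkN : k + 1 ≤ (N : ℝ) := by
      have := Nat.le_ceil k
      rw [hN]; push_cast; linarith
    set B : Polynomial ℝ := Polynomial.C ((k ^ 2)⁻¹) * (X ^ N * (A * A + 1)) with hB
    have hb : Filter.Tendsto (fun x => B.eval x / Real.exp x) Filter.atTop (nhds 0) :=
      B.tendsto_div_exp_atTop
    refine squeeze_zero_norm' ?_ hb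
    filter_upwards [Filter.eventually_ge_atTop 1] with x hx1
    have hx0 : (0:ℝ) < x := lt_of_lt_of_le one_pos hx1
    have hxk : (0:ℝ) < x + k := by positivity
    have hE : (0:ℝ) < Real.exp (-x) := Real.exp_pos _
    have hIk : ((x + k) ^ 2)⁻¹ ≤ (k ^ 2)⁻¹ := by
      apply inv_anti₀ hk2
      exact pow_le_pow_left₀ hk.le (by linarith) 2
    have t1 : x ^ (k + 1) ≤ x ^ (N : ℕ) := by
      rw [← Real.rpow_natCast x N]
      exact Real.rpow_le_rpow_of_exponent_le hx1 hkN
    have t3 : |A.eval x| ≤ A.eval x * A.eval x + 1 := by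
      nlinarith [abs_nonneg (A.eval x), sq_abs (A.eval x), sq_nonneg (|A.eval x| - 1)]
    have hgx : ‖g x‖ = x ^ (k + 1) * Real.exp (-x) * ((x + k) ^ 2)⁻¹ * |A.eval x| := by
      rw [hg]
      simp only []
      rw [Real.norm_eq_abs, abs_mul, abs_mul, abs_mul,
        abs_of_nonneg (Real.rpow_nonneg hx0.le _), abs_of_pos hE,
        abs_of_pos (by positivity : (0:ℝ) < ((x + k) ^ 2)⁻¹)]
    rw [hgx, hB]
    have hBx : (Polynomial.C ((k ^ 2)⁻¹) * (X ^ N * (A * A + 1))).eval x / Real.exp x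
        = x ^ (N : ℕ) * Real.exp (-x) * (k ^ 2)⁻¹ * (A.eval x * A.eval x + 1) := by
      simp only [Polynomial.eval_mul, Polynomial.eval_add, Polynomial.eval_pow,
        Polynomial.eval_X, Polynomial.eval_C, Polynomial.eval_one]
      rw [Real.exp_neg, div_eq_mul_inv]
      ring
    rw [hBx]
    have hA2 : (0:ℝ) ≤ A.eval x * A.eval x + 1 := by nlinarith [mul_self_nonneg (A.eval x)]
    calc x ^ (k + 1) * Real.exp (-x) * ((x + k) ^ 2)⁻¹ * |A.eval x|
        ≤ x ^ (N : ℕ) * Real.exp (-x) * (k ^ 2)⁻¹ * (A.eval x * A.eval x + 1) := by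
          apply mul_le_mul
          · apply mul_le_mul
            · exact mul_le_mul_of_nonneg_right t1 hE.le
            · exact hIk
            · positivity
            · positivity
          · exact t3
          · exact abs_nonneg _
          · positivity
      _ = _ := rfl
  have h0 : g 0 = 0 := by
    rw [hg]
    simp [Real.zero_rpow (show k + 1 ≠ 0 by positivity)]
  have hFTC := MeasureTheory.integral_Ioi_of_hasDerivAt_of_tendsto hcont hderiv
    (hint.const_mul ((m:ℝ) - (n:ℝ))) htop
  rw [h0, sub_zero] at hFTC
  rw [MeasureTheory.integral_const_mul] at hFTC
  have hc : ((m:ℝ) - (n:ℝ)) ≠ 0 := sub_ne_zero.mpr (by exact_mod_cast hmn)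
  exact (mul_eq_zero.mp hFTC).resolve_left hc
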